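/- Let ε > 0 be a real number. Then for every real y with 0 < y < 1, ((1+ε)(3+2ε)y² + εy + 1)·(1−y)^ε < 4. -/
import Mathlib

/-- For `ε > 0` and `0 < y < 1`: `((1+ε)(3+2ε)y² + εy + 1)(1−y)^ε < 4`. -/
theorem stmt_12 (ε : ℝ) (hε : 0 < ε) :
    ∀ y : ℝ, 0 < y → y < 1 →
      ((1 + ε) * (3 + 2 * ε) * y ^ 2 + ε * y + 1) * (1 - y) ^ ε < 4 := by
  intro y hy0 hy1
  have hy1' : 0 < 1 - y := by linarith
  set s : ℝ := ε * (y + y ^ 2 / 2) with hs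
  have hs0 : 0 < s := by
    have : 0 < y + y ^ 2 / 2 := by nlinarith
    exact mul_pos hε this
  -- exp(y - y²/2) ≤ 1 + y
  have hexpy : Real.exp y ≤ 1 + y + y ^ 2 / 2 + (2 / 9) * y ^ 3 := by
    have hb := Real.exp_bound (x := y) (by rw [abs_of_pos hy0]; linarith) (n := 3) (by norm_num)
    have hb' := (abs_sub_le_iff.1 hb).1
    have hsum : ∑ m ∈ Finset.range 3, y ^ m / m.factorial = 1 + y + y ^ 2 / 2 := by
      norm_num [Finset.sum_range_succ, Nat.factorial]
      try ring
    rw [hsum, abs_of_pos hy0] at hb'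
    have h3 : (3 : ℕ).succ / ((3 : ℕ).factorial * (3 : ℕ) : ℝ) = 2 / 9 := by
      norm_num [Nat.factorial]
    rw [h3] at hb'
    linarith
  have hA : Real.exp (y - y ^ 2 / 2) ≤ 1 + y := by
    have h1 : Real.exp (y - y ^ 2 / 2) * Real.exp (y ^ 2 / 2) = Real.exp y := by
      rw [← Real.exp_add]; ring_nf
    have h2 : 1 + y ^ 2 / 2 ≤ Real.exp (y ^ 2 / 2) := by
      have := Real.add_one_le_exp (y ^ 2 / 2); linarith
    have h3 : 0 < Real.exp (y ^ 2 / 2) := Real.exp_pos _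
    have h4 : Real.exp y ≤ (1 + y) * (1 + y ^ 2 / 2) := by nlinarith
    have h5 : Real.exp (y - y ^ 2 / 2) * Real.exp (y ^ 2 / 2) ≤ (1 + y) * Real.exp (y ^ 2 / 2) := by
      rw [h1]
      have : (1 + y) * (1 + y ^ 2 / 2) ≤ (1 + y) * Real.exp (y ^ 2 / 2) := by nlinarith
      linarith
    exact le_of_mul_le_mul_right h5 h3
  -- 1 - y ≤ exp(-(y + y²/2))
  have key1 : 1 - y ≤ Real.exp (-(y + y ^ 2 / 2)) := by
    have hB : 1 - y ^ 2 ≤ Real.exp (-(y ^ 2)) := by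
      have := Real.add_one_le_exp (-(y ^ 2)); linarith
    have hprod : Real.exp (-(y + y ^ 2 / 2)) * Real.exp (y - y ^ 2 / 2) = Real.exp (-(y ^ 2)) := by
      rw [← Real.exp_add]; ring_nf
    have h1 : (1 - y) * (1 + y) ≤ Real.exp (-(y + y ^ 2 / 2)) * (1 + y) := by
      have he : 0 < Real.exp (-(y + y ^ 2 / 2)) := Real.exp_pos _
      have := mul_le_mul_of_nonneg_left hA he.le
      rw [hprod] at this
      nlinarith
    have hy1p : 0 < 1 + y := by linarith
    exact le_of_mul_le_mul_right (by linarith [h1]) hy1p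
  -- (1-y)^ε ≤ exp(-s)
  have key2 : (1 - y) ^ ε ≤ Real.exp (-s) := by
    calc (1 - y) ^ ε ≤ Real.exp (-(y + y ^ 2 / 2)) ^ ε :=
          Real.rpow_le_rpow hy1'.le key1 hε.le
      _ = Real.exp (-(y + y ^ 2 / 2) * ε) := (Real.exp_mul _ _).symm
      _ = Real.exp (-s) := by rw [hs]; ring_nf
  -- exp(-s) ≤ 1/(1+s+s²/2)
  have hq : 1 + s + s ^ 2 / 2 ≤ Real.exp s := Real.quadratic_le_exp_of_nonneg hs0.le
  have key3 : Real.exp (-s) ≤ 1 / (1 + s + s ^ 2 / 2) := by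
    rw [Real.exp_neg]
    have hpos : 0 < 1 + s + s ^ 2 / 2 := by positivity
    rw [one_div]
    exact inv_anti₀ hpos hq
  -- combine
  have hP : 0 < (1 + ε) * (3 + 2 * ε) * y ^ 2 + ε * y + 1 := by positivity
  have hpos : 0 < 1 + s + s ^ 2 / 2 := by positivity
  have hrp : (0:ℝ) ≤ (1 - y) ^ ε := Real.rpow_nonneg hy1'.le _
  calc ((1 + ε) * (3 + 2 * ε) * y ^ 2 + ε * y + 1) * (1 - y) ^ ε
      ≤ ((1 + ε) * (3 + 2 * ε) * y ^ 2 + ε * y + 1) * (1 / (1 + s + s ^ 2 / 2)) := by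
        exact mul_le_mul_of_nonneg_left (key2.trans key3) hP.le
    _ < 4 := by
        rw [mul_one_div, div_lt_iff₀ hpos]
        have hsq : s ^ 2 ≥ ε ^ 2 * y ^ 2 := by
          rw [hs]
          nlinarith [sq_nonneg (ε * y), sq_nonneg (ε * y ^ 2), mul_pos hε hy0]
        nlinarith [mul_pos (mul_pos hε hy0) hy1', mul_pos hy0 hy1',
          mul_pos hε (mul_pos hy0 hy0), sq_nonneg (ε * y)]
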